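/- Let M be an integral lattice of hyperbolic signature (1,r) with r ≥ 2, containing a vector h with h·h = 2g−2 where g ≥ 2, and suppose v₁, v₂ ∈ M are isotropic vectors linearly independent together with h, with v_i·h ∈ {1,2} for i = 1,2 (and v_i·h = 1 required if g = 2). Then g ∈ {3,4}, v₁·h = v₂·h = 2, and v₁·v₂ = 1. -/

import Mathlib

set_option maxHeartbeats 1000000 in
/-- Let `φ` have hyperbolic signature `(1,r)`, `r ≥ 2`, on a real vector
space, `h` a vector with `h·h = 2g-2` (`g ≥ 2`), and `v₁, v₂` isotropic vectors, linearly
independent together with `h`, with integral inner products `aᵢ = vᵢ·h ∈ {1,2}` (with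
`aᵢ = 1` required when `g = 2`) and `λ = v₁·v₂ ∈ ℤ`.  Then `g ∈ {3,4}`,
`a₁ = a₂ = 2` and `λ = 1`. -/
theorem hyperbolic_lattice_two_isotropic_vectors_forces_g
    {V : Type*} [AddCommGroup V] [Module ℝ V] [FiniteDimensional ℝ V]
    (r : ℕ) (hr : 2 ≤ r) (g : ℕ) (hg : 2 ≤ g)
    (φ : V →ₗ[ℝ] V →ₗ[ℝ] ℝ)
    (hsymm : ∀ x y : V, φ x y = φ y x)
    (hsig : ∃ P N : Submodule ℝ V, IsCompl P N ∧
      Module.finrank ℝ P = 1 ∧ Module.finrank ℝ N = r ∧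
      (∀ x ∈ P, x ≠ 0 → 0 < φ x x) ∧
      (∀ x ∈ N, x ≠ 0 → φ x x < 0) ∧
      (∀ x ∈ P, ∀ y ∈ N, φ x y = 0))
    (h v₁ v₂ : V)
    (hli : LinearIndependent ℝ ![h, v₁, v₂])
    (hhh : φ h h = 2 * (g : ℝ) - 2)
    (hv₁ : φ v₁ v₁ = 0) (hv₂ : φ v₂ v₂ = 0)
    (a₁ a₂ lam : ℤ)
    (ha₁ : φ v₁ h = (a₁ : ℝ)) (ha₂ : φ v₂ h = (a₂ : ℝ))
    (hlam : φ v₁ v₂ = (lam : ℝ))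
    (ha₁m : a₁ = 1 ∨ a₁ = 2) (ha₂m : a₂ = 1 ∨ a₂ = 2)
    (hg2 : g = 2 → a₁ = 1 ∧ a₂ = 1) :
    (g = 3 ∨ g = 4) ∧ a₁ = 2 ∧ a₂ = 2 ∧ lam = 1 := by
  obtain ⟨P, N, hPN, hdP, hdN, hPpos, hNneg, hortho⟩ := hsig
  have hgR : (2:ℝ) ≤ (g:ℝ) := by exact_mod_cast hg
  have hGpos : (0:ℝ) < 2*(g:ℝ) - 2 := by linarith
  have hNle : ∀ n ∈ N, φ n n ≤ 0 := by
    intro n hn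
    by_cases h0 : n = 0
    · simp [h0]
    · exact le_of_lt (hNneg n hn h0)
  -- decompose h
  obtain ⟨ph, nh, hph, hnh, hhsum⟩ := Submodule.codisjoint_iff_exists_add_eq.mp hPN.codisjoint h
  have hcross_h : φ ph nh = 0 := hortho ph hph nh hnh
  have hhh' : φ ph ph + φ nh nh = 2*(g:ℝ) - 2 := by
    have := hhh
    rw [← hhsum] at this
    simp only [map_add, LinearMap.add_apply] at this
    rw [hcross_h, hsymm nh ph, hcross_h] at this
    linarith
  have hphpos : 0 < φ ph ph := by
    have := hNle nh hnh; linarith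
  have hph0 : ph ≠ 0 := by
    intro h0; rw [h0] at hphpos; simp at hphpos
  -- key lemma: vectors orthogonal to h are negative
  have key : ∀ x : V, φ x h = 0 → x ≠ 0 → φ x x < 0 := by
    intro x hxh hx0
    by_contra hcon
    push_neg at hcon
    obtain ⟨px, nx, hpx, hnx, hxsum⟩ := Submodule.codisjoint_iff_exists_add_eq.mp hPN.codisjoint x
    have hcross : φ px nx = 0 := hortho px hpx nx hnx
    have hxx : φ x x = φ px px + φ nx nx := by
      rw [← hxsum]
      simp only [map_add, LinearMap.add_apply]
      rw [hcross, hsymm nx px, hcross]; ring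
    by_cases hp0 : px = 0
    · have h1 : φ x x = φ nx nx := by rw [hxx, hp0]; simp
      have hnx0 : nx = 0 := by
        by_contra hh
        have := hNneg nx hnx hh; linarith [h1 ▸ hcon]
      exact hx0 (by rw [← hxsum, hp0, hnx0, add_zero])
    · obtain ⟨c, hc⟩ := (finrank_eq_one_iff_of_nonzero' (⟨ph, hph⟩ : P)
        (by simpa using hph0)).mp hdP ⟨px, hpx⟩
      have hcv : c • ph = px := by simpa using congrArg Subtype.val hc
      have hc0 : c ≠ 0 := by
        intro h0; rw [h0, zero_smul] at hcv; exact hp0 hcv.symm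
      have hyN : c • h - x ∈ N := by
        have : c • h - x = c • nh - nx := by
          rw [← hhsum, ← hxsum, ← hcv]; rw [smul_add]; abel
        rw [this]
        exact N.sub_mem (N.smul_mem c hnh) hnx
      have hyy : φ (c • h - x) (c • h - x) = c^2 * (2*(g:ℝ)-2) + φ x x := by
        simp only [map_sub, map_smul, LinearMap.sub_apply, LinearMap.smul_apply,
          smul_eq_mul, hhh, hxh, hsymm h x, hxh]
        ring
      have hle := hNle _ hyN
      rw [hyy] at hle
      nlinarith [sq_nonneg c, hc0, mul_pos (mul_pos (mul_self_pos.mpr hc0) hGpos) hGpos]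
  -- the special vector
  set m : ℝ := (g:ℝ) - 1 with hm
  set A1 : ℝ := (a₁:ℝ) with hA1
  set A2 : ℝ := (a₂:ℝ) with hA2
  set L : ℝ := (lam:ℝ) with hL
  have hm1 : (1:ℝ) ≤ m := by rw [hm]; linarith
  have hA2ne : A2 ≠ 0 := by
    rcases ha₂m with rfl | rfl <;> norm_num [hA2]
  set α : ℝ := 2*m*A2^2 with hα
  set β : ℝ := 2*m*(2*L*m - A1*A2) with hβ
  set γ : ℝ := -(2*L*A2*m) with hγ
  set x : V := α • v₁ + β • v₂ + γ • h with hxd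
  have hsymm1 : φ h v₁ = A1 := by rw [hsymm]; exact ha₁
  have hsymm2 : φ h v₂ = A2 := by rw [hsymm]; exact ha₂
  have hsymm3 : φ v₂ v₁ = L := by rw [hsymm]; exact hlam
  have hxh : φ x h = 0 := by
    simp only [hxd, map_add, map_smul, LinearMap.add_apply, LinearMap.smul_apply,
      smul_eq_mul, ha₁, ha₂, hhh]
    rw [hα, hβ, hγ, hm]; ring
  have hx0 : x ≠ 0 := by
    intro h0
    have hsum : ∑ i, ![γ, α, β] i • ![h, v₁, v₂] i = 0 := by
      rw [Fin.sum_univ_three]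
      simp only [Matrix.cons_val_zero, Matrix.cons_val_one, Matrix.head_cons,
        Matrix.cons_val_two, Matrix.tail_cons]
      rw [add_rotate]
      exact h0
    have := Fintype.linearIndependent_iff.mp hli ![γ, α, β] hsum 1
    simp only [Matrix.cons_val_one, Matrix.head_cons] at this
    rw [hα] at this
    rcases mul_eq_zero.mp this with h' | h'
    · linarith
    · exact hA2ne (pow_eq_zero_iff (n := 2) (by norm_num) |>.mp h')
  have hneg := key x hxh hx0
  have hval : φ x x = 8*L*A2^2*m^2*(L*m - A1*A2) := by
    simp only [hxd, map_add, map_smul, LinearMap.add_apply, LinearMap.smul_apply,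
      smul_eq_mul, hv₁, hv₂, hlam, ha₁, ha₂, hhh, hsymm1, hsymm2, hsymm3]
    rw [hα, hβ, hγ, hm]; ring
  rw [hval] at hneg
  have hQ : L * (L*m - A1*A2) < 0 := by
    by_contra hq
    push_neg at hq
    have h8 : (0:ℝ) < 8*A2^2*m^2 := by positivity
    have hh := mul_nonneg (le_of_lt h8) hq
    have heq : 8*A2^2*m^2*(L*(L*m - A1*A2)) = 8*L*A2^2*m^2*(L*m - A1*A2) := by ring
    linarith [hh, heq]
  -- cast to ℤ
  have hZ : lam * (lam * ((g:ℤ) - 1) - a₁*a₂) < 0 := by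
    have : ((lam * (lam * ((g:ℤ) - 1) - a₁*a₂) : ℤ) : ℝ) < 0 := by
      push_cast
      rw [hL, hm, hA1, hA2] at hQ
      linarith [hQ]
    exact_mod_cast this
  -- final integer arithmetic
  by_cases hgtwo : g = 2
  · exfalso
    obtain ⟨rfl, rfl⟩ := hg2 hgtwo
    subst hgtwo
    norm_num at hZ
    nlinarith [sq_nonneg (2*lam - 1)]
  have hg3 : 3 ≤ g := by omega
  have hG1 : 2 ≤ (g:ℤ) - 1 := by
    have : (3:ℤ) ≤ (g:ℤ) := by exact_mod_cast hg3
    omega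
  have hlam_pos : 0 < lam := by
    by_contra hl
    push_neg at hl
    have haa : 1 ≤ a₁ * a₂ := by rcases ha₁m with rfl | rfl <;> rcases ha₂m with rfl | rfl <;> norm_num
    have h1 : lam * ((g:ℤ)-1) ≤ 0 := mul_nonpos_of_nonpos_of_nonneg hl (by omega)
    have h2 : lam * ((g:ℤ)-1) - a₁*a₂ ≤ -1 := by omega
    have h2' : lam * ((g:ℤ)-1) - a₁*a₂ ≤ 0 := by linarith
    have hpr := mul_nonneg (neg_nonneg.mpr hl) (neg_nonneg.mpr h2')
    nlinarith [hpr]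
  have hlam1 : 1 ≤ lam := hlam_pos
  have hfac : lam * ((g:ℤ)-1) < a₁*a₂ := by
    by_contra hf
    push_neg at hf
    nlinarith [mul_nonneg (le_of_lt hlam_pos) (by linarith : (0:ℤ) ≤ lam * ((g:ℤ)-1) - a₁*a₂)]
  have hlb1 : (g:ℤ) - 1 ≤ lam * ((g:ℤ)-1) := le_mul_of_one_le_left (by omega) hlam1
  have hlb2 : lam * 2 ≤ lam * ((g:ℤ)-1) := mul_le_mul_of_nonneg_left hG1 (le_of_lt hlam_pos)
  have haa4 : a₁ = 2 ∧ a₂ = 2 := by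
    rcases ha₁m with rfl | rfl <;> rcases ha₂m with rfl | rfl <;> norm_num at hfac ⊢ <;> omega
  obtain ⟨rfl, rfl⟩ := haa4
  norm_num at hfac
  have hlam_eq : lam = 1 := by omega
  have hgle : (g:ℤ) ≤ 4 := by omega
  have : g ≤ 4 := by exact_mod_cast hgle
  exact ⟨by omega, rfl, rfl, hlam_eq⟩
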